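/- Let b ≥ 1 and let z(b) ∈ (0,1) be the unique root of ∑_{i=b+1}^{2b+1} z^i = 1. Then (b+1)(1 - z(b)) → +∞ as b → ∞. -/

import Mathlib

open Finset Filter

/-- If `z b ∈ (0,1)` denotes the root of `z^{b+1} + ⋯ + z^{2b+1} = 1`, then
`(b+1)(1 - z(b)) → +∞` as `b → ∞`. -/
theorem stmt9 (z : ℕ → ℝ)
    (hz : ∀ b, 1 ≤ b → 0 < z b ∧ z b < 1 ∧
      ∑ i ∈ Finset.Icc (b + 1) (2 * b + 1), (z b) ^ i = 1) :
    Tendsto (fun b : ℕ => ((b : ℝ) + 1) * (1 - z b)) atTop atTop := by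
  have key : ∀ b : ℕ, 1 ≤ b → Real.log (b + 1) / 4 ≤ ((b : ℝ) + 1) * (1 - z b) := by
    intro b hb
    obtain ⟨hz0, hz1, hsum⟩ := hz b hb
    set x := z b with hx
    have hcard : (Finset.Icc (b + 1) (2 * b + 1)).card = b + 1 := by
      rw [Nat.card_Icc]; omega
    have hbpos : (0 : ℝ) < (b : ℝ) + 1 := by positivity
    -- 1 ≤ (b+1) * x^(b+1)
    have h1 : (1 : ℝ) ≤ ((b : ℝ) + 1) * x ^ (b + 1) := by
      calc (1 : ℝ) = ∑ i ∈ Finset.Icc (b + 1) (2 * b + 1), x ^ i := hsum.symm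
        _ ≤ ∑ _i ∈ Finset.Icc (b + 1) (2 * b + 1), x ^ (b + 1) := by
            apply Finset.sum_le_sum
            intro i hi
            exact pow_le_pow_of_le_one hz0.le hz1.le (Finset.mem_Icc.mp hi).1
        _ = ((b : ℝ) + 1) * x ^ (b + 1) := by
            rw [Finset.sum_const, hcard, nsmul_eq_mul]; push_cast; ring
    -- (b+1) * x^(2b+2) ≤ 1
    have h2 : ((b : ℝ) + 1) * x ^ (2 * b + 2) ≤ 1 := by
      calc ((b : ℝ) + 1) * x ^ (2 * b + 2)
          ≤ ((b : ℝ) + 1) * x ^ (2 * b + 1) := by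
            apply mul_le_mul_of_nonneg_left _ hbpos.le
            exact pow_le_pow_of_le_one hz0.le hz1.le (by omega)
        _ = ∑ _i ∈ Finset.Icc (b + 1) (2 * b + 1), x ^ (2 * b + 1) := by
            rw [Finset.sum_const, hcard, nsmul_eq_mul]; push_cast; ring
        _ ≤ ∑ i ∈ Finset.Icc (b + 1) (2 * b + 1), x ^ i := by
            apply Finset.sum_le_sum
            intro i hi
            exact pow_le_pow_of_le_one hz0.le hz1.le (Finset.mem_Icc.mp hi).2
        _ = 1 := hsum
    -- x ≥ 1/2
    have hhalf : (1 : ℝ) / 2 ≤ x := by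
      by_contra h
      push_neg at h
      have hpow : x ^ (b + 1) < (1 / 2 : ℝ) ^ (b + 1) :=
        pow_lt_pow_left₀ h hz0.le (by omega)
      have hnat : (b : ℝ) + 1 < 2 ^ (b + 1) := by
        have := Nat.lt_two_pow_self (n := b + 1)
        exact_mod_cast this
      have : ((b : ℝ) + 1) * x ^ (b + 1) < ((b : ℝ) + 1) * (1 / 2 : ℝ) ^ (b + 1) :=
        mul_lt_mul_of_pos_left hpow hbpos
      have hlt1 : ((b : ℝ) + 1) * (1 / 2 : ℝ) ^ (b + 1) < 1 := by
        rw [div_pow, one_pow, mul_one_div, div_lt_one (by positivity)]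
        exact hnat
      linarith
    -- logs
    have hlogx_neg : Real.log x < 0 := Real.log_neg hz0 hz1
    have hlog2 : Real.log ((b : ℝ) + 1) ≤ 2 * ((b : ℝ) + 1) * (-Real.log x) := by
      have hx2 : x ^ (2 * b + 2) ≤ 1 / ((b : ℝ) + 1) := by
        rw [le_div_iff₀ hbpos]; linarith [h2]
      have hlogle : Real.log (x ^ (2 * b + 2)) ≤ Real.log (1 / ((b : ℝ) + 1)) :=
        Real.log_le_log (by positivity) hx2
      rw [Real.log_pow, Real.log_div one_ne_zero (ne_of_gt hbpos), Real.log_one] at hlogle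
      push_cast at hlogle
      linarith
    -- x * (-log x) ≤ 1 - x
    have hbern : x * (-Real.log x) ≤ 1 - x := by
      have := Real.log_le_sub_one_of_pos (show (0 : ℝ) < 1 / x by positivity)
      rw [Real.log_div one_ne_zero (ne_of_gt hz0), Real.log_one] at this
      have hx : 0 - Real.log x ≤ 1 / x - 1 := this
      have := mul_le_mul_of_nonneg_left hx hz0.le
      calc x * (-Real.log x) = x * (0 - Real.log x) := by ring
        _ ≤ x * (1 / x - 1) := this
        _ = 1 - x := by field_simp
    -- combine
    have hstep : Real.log ((b : ℝ) + 1) / 4 ≤ ((b : ℝ) + 1) * (x * (-Real.log x)) := by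
      have h3 : (1 / 2 : ℝ) * (-Real.log x) ≤ x * (-Real.log x) :=
        mul_le_mul_of_nonneg_right hhalf (by linarith)
      have h4 : ((b : ℝ) + 1) * ((1 / 2 : ℝ) * (-Real.log x)) ≤
          ((b : ℝ) + 1) * (x * (-Real.log x)) :=
        mul_le_mul_of_nonneg_left h3 hbpos.le
      nlinarith [hlog2]
    have : ((b : ℝ) + 1) * (x * (-Real.log x)) ≤ ((b : ℝ) + 1) * (1 - x) :=
      mul_le_mul_of_nonneg_left hbern hbpos.le
    push_cast
    linarith
  have htend : Tendsto (fun b : ℕ => Real.log ((b : ℝ) + 1) / 4) atTop atTop := by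
    apply Tendsto.atTop_div_const (by norm_num)
    exact Real.tendsto_log_atTop.comp (tendsto_atTop_add_const_right atTop 1 tendsto_natCast_atTop_atTop)
  exact tendsto_atTop_mono' atTop
    (by filter_upwards [eventually_ge_atTop 1] with b hb using key b hb) htend
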